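/- Let X, S ∈ Sⁿ be positive semidefinite matrices, let r ≥ 0, let V ∈ R^{n×r} have columns equal to orthonormal eigenvectors of S corresponding to its r smallest eigenvalues, and let V = range(V). Set ε = tr(XS) and T = λ_{n−r}(S) (the (n−r)-th largest eigenvalue of S). If T > 0, then ‖P_{V⊥}(X)‖_F ≤ ε/T + √(2(ε/T)‖X‖_op), where P_{V⊥} is the orthogonal projection (in the trace inner product) onto the orthogonal complement of {V R Vᵀ : R ∈ Sʳ}. -/

import Mathlib

open Matrix

/-- Frobenius norm of a real square matrix. -/
noncomputable def frobNorm {n : ℕ} (M : Matrix (Fin n) (Fin n) ℝ) : ℝ :=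
  Real.sqrt (∑ i, ∑ j, (M i j) ^ 2)

/-- Operator (spectral) norm of a real square matrix. -/
noncomputable def opNorm {n : ℕ} (M : Matrix (Fin n) (Fin n) ℝ) : ℝ :=
  sSup {r : ℝ | ∃ x : Fin n → ℝ, ∑ i, (x i) ^ 2 = 1 ∧
    r = Real.sqrt (∑ i, ((M *ᵥ x) i) ^ 2)}

section AUX

lemma real_ct {m k : Type*} (M : Matrix m k ℝ) : Mᴴ = Mᵀ := by
  ext i j; simp [Matrix.conjTranspose_apply]

lemma star_vec {k : Type*} (x : k → ℝ) : star x = x := by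
  funext i; simp

lemma dot_mulVec_left {n : ℕ} (A : Matrix (Fin n) (Fin n) ℝ) (v w : Fin n → ℝ) :
    (A *ᵥ v) ⬝ᵥ w = v ⬝ᵥ (Aᵀ *ᵥ w) := by
  simp only [dotProduct, mulVec, dotProduct, Matrix.transpose_apply,
    Finset.sum_mul, Finset.mul_sum]
  rw [Finset.sum_comm]
  apply Finset.sum_congr rfl; intro i _
  apply Finset.sum_congr rfl; intro j _
  ring

lemma psd_sqrt_ex {n : ℕ} {A : Matrix (Fin n) (Fin n) ℝ} (hA : A.PosSemidef) :
    ∃ C : Matrix (Fin n) (Fin n) ℝ, C.PosSemidef ∧ C * C = A := by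
  open scoped MatrixOrder in
  exact ⟨CFC.sqrt A, Matrix.nonneg_iff_posSemidef.mp (CFC.sqrt_nonneg A),
    CFC.sqrt_mul_sqrt_self A hA.nonneg⟩

lemma psd_trace_nonneg {n : ℕ} {A : Matrix (Fin n) (Fin n) ℝ} (hA : A.PosSemidef) :
    0 ≤ A.trace := by
  rw [Matrix.trace]
  refine Finset.sum_nonneg fun i _ => ?_
  have h := hA.dotProduct_mulVec_nonneg (Pi.single i 1)
  simpa [star_vec, dotProduct, Matrix.mulVec, Pi.single_apply, Matrix.diag] using h

lemma psd_trace_mul_nonneg {n : ℕ} {A B : Matrix (Fin n) (Fin n) ℝ}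
    (hA : A.PosSemidef) (hB : B.PosSemidef) : 0 ≤ (A * B).trace := by
  obtain ⟨C, hCpsd, hCC⟩ := psd_sqrt_ex hA
  have hCH : Cᴴ = C := hCpsd.1
  have hpsd : (C * B * C).PosSemidef := by
    have := hB.conjTranspose_mul_mul_same C
    rwa [hCH] at this
  have : (A * B).trace = (C * B * C).trace := by
    rw [← hCC, Matrix.mul_assoc, Matrix.trace_mul_comm, Matrix.mul_assoc]
  rw [this]
  exact psd_trace_nonneg hpsd

lemma psd_entry_sq_le {n : ℕ} {A : Matrix (Fin n) (Fin n) ℝ} (hA : A.PosSemidef)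
    (i j : Fin n) : (A i j) ^ 2 ≤ A i i * A j j := by
  obtain ⟨C, hCpsd, hCC⟩ := psd_sqrt_ex hA
  have hCt : Cᵀ = C := by rw [← real_ct]; exact hCpsd.1
  have hsym : ∀ a b, C a b = C b a := fun a b => congrFun (congrFun hCt b) a
  have hentry : ∀ a b, A a b = ∑ k, C a k * C b k := by
    intro a b
    rw [← hCC, Matrix.mul_apply]
    exact Finset.sum_congr rfl fun k _ => by rw [hsym k b]
  rw [hentry i j, hentry i i, hentry j j]
  have h := Finset.sum_mul_sq_le_sq_mul_sq Finset.univ (fun k => C i k) (fun k => C j k)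
  simpa [pow_two] using h

lemma psd_trace_sq_le {n : ℕ} {M : Matrix (Fin n) (Fin n) ℝ} (hM : M.PosSemidef) :
    (M * M).trace ≤ M.trace ^ 2 := by
  have hMt : Mᵀ = M := by rw [← real_ct]; exact hM.1
  have hsym : ∀ a b, M a b = M b a := fun a b => congrFun (congrFun hMt b) a
  have h1 : (M * M).trace = ∑ i, ∑ j, (M i j) ^ 2 := by
    rw [Matrix.trace]
    apply Finset.sum_congr rfl; intro i _
    rw [Matrix.diag, Matrix.mul_apply]
    exact Finset.sum_congr rfl fun j _ => by rw [pow_two]; rw [hsym j i]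
  have h2 : M.trace ^ 2 = ∑ i, ∑ j, M i i * M j j := by
    rw [Matrix.trace, pow_two, Finset.sum_mul_sum]
    rfl
  rw [h1, h2]
  exact Finset.sum_le_sum fun i _ => Finset.sum_le_sum fun j _ => psd_entry_sq_le hM i j

lemma frob_sq_eq_trace {n : ℕ} (M : Matrix (Fin n) (Fin n) ℝ) :
    ∑ i, ∑ j, (M i j) ^ 2 = (Mᵀ * M).trace := by
  rw [Matrix.trace]
  rw [Finset.sum_comm]
  apply Finset.sum_congr rfl; intro j _
  rw [Matrix.diag, Matrix.mul_apply]
  exact Finset.sum_congr rfl fun i _ => by rw [pow_two, Matrix.transpose_apply]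



lemma opNorm_bddAbove {n : ℕ} (M : Matrix (Fin n) (Fin n) ℝ) :
    BddAbove {r : ℝ | ∃ x : Fin n → ℝ, ∑ i, (x i) ^ 2 = 1 ∧
      r = Real.sqrt (∑ i, ((M *ᵥ x) i) ^ 2)} := by
  refine ⟨Real.sqrt (∑ i, ∑ j, (M i j) ^ 2), ?_⟩
  rintro r ⟨x, hx, rfl⟩
  apply Real.sqrt_le_sqrt
  refine Finset.sum_le_sum fun i _ => ?_
  have h := Finset.sum_mul_sq_le_sq_mul_sq Finset.univ (fun j => M i j) x
  calc ((M *ᵥ x) i) ^ 2 = (∑ j, M i j * x j) ^ 2 := rfl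
    _ ≤ (∑ j, (M i j) ^ 2) * ∑ j, (x j) ^ 2 := h
    _ = ∑ j, (M i j) ^ 2 := by rw [hx, mul_one]

lemma opNorm_nonneg {n : ℕ} (M : Matrix (Fin n) (Fin n) ℝ) : 0 ≤ opNorm M := by
  rcases Nat.eq_zero_or_pos n with h | h
  · subst h
    have : {r : ℝ | ∃ x : Fin 0 → ℝ, ∑ i, (x i) ^ 2 = 1 ∧
        r = Real.sqrt (∑ i, ((M *ᵥ x) i) ^ 2)} = ∅ := by
      ext r; simp
    rw [opNorm, this, Real.sSup_empty]
  · have i0 : Fin n := ⟨0, h⟩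
    have hmem : Real.sqrt (∑ i, ((M *ᵥ Pi.single i0 1) i) ^ 2) ∈
        {r : ℝ | ∃ x : Fin n → ℝ, ∑ i, (x i) ^ 2 = 1 ∧
          r = Real.sqrt (∑ i, ((M *ᵥ x) i) ^ 2)} := by
      refine ⟨Pi.single i0 1, ?_, rfl⟩
      simp [Pi.single_apply]
    exact le_trans (Real.sqrt_nonneg _) (le_csSup (opNorm_bddAbove M) hmem)

lemma dot_le_opNorm {n : ℕ} (M : Matrix (Fin n) (Fin n) ℝ) (x : Fin n → ℝ) :
    x ⬝ᵥ (M *ᵥ x) ≤ opNorm M * (x ⬝ᵥ x) := by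
  rcases eq_or_ne x 0 with rfl | hx
  · simp
  · have hxx : 0 < ∑ i, (x i) ^ 2 := by
      have : ∃ i, x i ≠ 0 := by
        by_contra h
        push_neg at h
        exact hx (funext h)
      obtain ⟨i, hi⟩ := this
      exact Finset.sum_pos' (fun j _ => sq_nonneg _)
        ⟨i, Finset.mem_univ i, by positivity⟩
    set s := Real.sqrt (∑ i, (x i) ^ 2) with hs
    have hspos : 0 < s := Real.sqrt_pos.2 hxx
    have hs2 : s ^ 2 = ∑ i, (x i) ^ 2 := Real.sq_sqrt hxx.le
    set u := s⁻¹ • x with hu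
    have hu1 : ∑ i, (u i) ^ 2 = 1 := by
      simp only [hu, Pi.smul_apply, smul_eq_mul, mul_pow, ← Finset.mul_sum]
      rw [← hs2]
      field_simp
    have hmem : Real.sqrt (∑ i, ((M *ᵥ u) i) ^ 2) ∈
        {r : ℝ | ∃ y : Fin n → ℝ, ∑ i, (y i) ^ 2 = 1 ∧
          r = Real.sqrt (∑ i, ((M *ᵥ y) i) ^ 2)} := ⟨u, hu1, rfl⟩
    have hle : Real.sqrt (∑ i, ((M *ᵥ u) i) ^ 2) ≤ opNorm M :=
      le_csSup (opNorm_bddAbove M) hmem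
    have hCS : u ⬝ᵥ (M *ᵥ u) ≤ Real.sqrt (∑ i, ((M *ᵥ u) i) ^ 2) := by
      have h := Real.sum_mul_le_sqrt_mul_sqrt Finset.univ u (M *ᵥ u)
      calc u ⬝ᵥ (M *ᵥ u) = ∑ i, u i * (M *ᵥ u) i := rfl
        _ ≤ Real.sqrt (∑ i, (u i) ^ 2) * Real.sqrt (∑ i, ((M *ᵥ u) i) ^ 2) := h
        _ = Real.sqrt (∑ i, ((M *ᵥ u) i) ^ 2) := by rw [hu1]; simp
    have hxu : x = s • u := by
      rw [hu, smul_smul, mul_inv_cancel₀ hspos.ne', one_smul]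
    have hdot : x ⬝ᵥ (M *ᵥ x) = s ^ 2 * (u ⬝ᵥ (M *ᵥ u)) := by
      rw [hxu]
      rw [Matrix.mulVec_smul, smul_dotProduct, dotProduct_smul]
      simp [smul_eq_mul, pow_two]; ring
    have hxxd : x ⬝ᵥ x = s ^ 2 := by
      rw [hs2]
      simp [dotProduct, pow_two]
    rw [hdot, hxxd]
    calc s ^ 2 * (u ⬝ᵥ (M *ᵥ u)) ≤ s ^ 2 * opNorm M := by
          apply mul_le_mul_of_nonneg_left (le_trans hCS hle) (sq_nonneg s)
      _ = opNorm M * s ^ 2 := mul_comm _ _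


lemma psd_opNorm_smul_sub {n : ℕ} {X : Matrix (Fin n) (Fin n) ℝ} (hX : X.PosSemidef) :
    (opNorm X • (1 : Matrix (Fin n) (Fin n) ℝ) - X).PosSemidef := by
  refine Matrix.PosSemidef.of_dotProduct_mulVec_nonneg ?_ ?_
  · rw [Matrix.IsHermitian, real_ct, transpose_sub, transpose_smul, transpose_one]
    rw [show Xᵀ = X from by rw [← real_ct]; exact hX.1]
  · intro x
    rw [star_vec, Matrix.sub_mulVec, dotProduct_sub, Matrix.smul_mulVec,
      Matrix.one_mulVec, dotProduct_smul, smul_eq_mul, sub_nonneg]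
    exact dot_le_opNorm X x

end AUX

set_option maxHeartbeats 1000000 in
theorem stmt11 {n r : ℕ} (X S : Matrix (Fin n) (Fin n) ℝ)
    (hX : X.PosSemidef) (hS : S.PosSemidef)
    (V : Matrix (Fin n) (Fin r) ℝ) (hV : Vᵀ * V = 1)
    (μ : Fin r → ℝ) (hEig : S * V = V * Matrix.diagonal μ)
    (T : ℝ) (hT : 0 < T) (hμ : ∀ j, μ j ≤ T)
    (hlow : ∀ x : Fin n → ℝ, Vᵀ *ᵥ x = 0 → T * (x ⬝ᵥ x) ≤ x ⬝ᵥ (S *ᵥ x))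
    (ε : ℝ) (hε : ε = (X * S).trace) :
    frobNorm (X - V * (Vᵀ * X * V) * Vᵀ) ≤
      ε / T + Real.sqrt (2 * (ε / T) * opNorm X) := by
  classical
  have hXt : Xᵀ = X := by rw [← real_ct]; exact hX.1
  have hSt : Sᵀ = S := by rw [← real_ct]; exact hS.1
  set P : Matrix (Fin n) (Fin n) ℝ := V * Vᵀ with hPdef
  have hPt : Pᵀ = P := by rw [hPdef, transpose_mul, transpose_transpose]
  have hP2 : P * P = P := by
    rw [hPdef, Matrix.mul_assoc, ← Matrix.mul_assoc Vᵀ V Vᵀ, hV, Matrix.one_mul]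
  set Q : Matrix (Fin n) (Fin n) ℝ := 1 - P with hQdef
  have hQt : Qᵀ = Q := by rw [hQdef, transpose_sub, transpose_one, hPt]
  have hQ2 : Q * Q = Q := by
    rw [hQdef, sub_mul, one_mul, mul_sub, mul_one, hP2]; abel
  have hQP : Q * P = 0 := by rw [hQdef, sub_mul, one_mul, hP2, sub_self]
  have hPQ : P * Q = 0 := by rw [hQdef, mul_sub, mul_one, hP2, sub_self]
  have hQ2' : ∀ W : Matrix (Fin n) (Fin n) ℝ, Q * (Q * W) = Q * W := fun W => by
    rw [← Matrix.mul_assoc, hQ2]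
  have hP2' : ∀ W : Matrix (Fin n) (Fin n) ℝ, P * (P * W) = P * W := fun W => by
    rw [← Matrix.mul_assoc, hP2]
  have hQpsd : Q.PosSemidef := by
    have h := Matrix.PosSemidef.one.mul_mul_conjTranspose_same Q
    rwa [Matrix.mul_one, real_ct, hQt, hQ2] at h
  -- S commutes with P
  have h1 : S * P = V * Matrix.diagonal μ * Vᵀ := by
    rw [hPdef, ← Matrix.mul_assoc, hEig]
  have hSP : S * P = P * S := by
    have h2 : P * S = V * (Matrix.diagonal μ * Vᵀ) := by
      calc P * S = (Sᵀ * Pᵀ)ᵀ := by rw [← transpose_mul, transpose_transpose]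
        _ = (S * P)ᵀ := by rw [hSt, hPt]
        _ = (V * Matrix.diagonal μ * Vᵀ)ᵀ := by rw [h1]
        _ = V * (Matrix.diagonal μ * Vᵀ) := by
            rw [transpose_mul, transpose_mul, transpose_transpose,
              Matrix.diagonal_transpose]
    rw [h1, h2, Matrix.mul_assoc]
  have hVQ : Vᵀ * Q = 0 := by
    rw [hQdef, Matrix.mul_sub, Matrix.mul_one, hPdef, ← Matrix.mul_assoc, hV, Matrix.one_mul, sub_self]
  have hQSP : Q * S * P = 0 := by
    rw [Matrix.mul_assoc, hSP, ← Matrix.mul_assoc, hQP, zero_mul]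
  have hPSQ : P * S * Q = 0 := by
    rw [← hSP, Matrix.mul_assoc, hPQ, Matrix.mul_zero]
  -- Fact A : S - T • Q is PSD
  have hKey : (S - T • Q).PosSemidef := by
    refine Matrix.PosSemidef.of_dotProduct_mulVec_nonneg ?_ ?_
    · rw [Matrix.IsHermitian, real_ct, transpose_sub, transpose_smul, hQt, hSt]
    · intro x
      rw [star_vec]
      set y := Q *ᵥ x with hy
      set z := P *ᵥ x with hz
      have hyz : y + z = x := by
        rw [hy, hz, ← Matrix.add_mulVec, hQdef, sub_add_cancel, Matrix.one_mulVec]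
      have hVy : Vᵀ *ᵥ y = 0 := by
        rw [hy, Matrix.mulVec_mulVec, hVQ, Matrix.zero_mulVec]
      have hyy : y ⬝ᵥ y = x ⬝ᵥ (Q *ᵥ x) := by
        rw [show (y ⬝ᵥ y) = (Q *ᵥ x) ⬝ᵥ y from by rw [hy], dot_mulVec_left, hQt, hy,
          Matrix.mulVec_mulVec, hQ2]
      have hcross1 : y ⬝ᵥ (S *ᵥ z) = 0 := by
        rw [show (y ⬝ᵥ (S *ᵥ z)) = (Q *ᵥ x) ⬝ᵥ (S *ᵥ z) from by rw [hy],
          dot_mulVec_left, hQt, hz, Matrix.mulVec_mulVec, Matrix.mulVec_mulVec,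
          hQSP, Matrix.zero_mulVec, dotProduct_zero]
      have hcross2 : z ⬝ᵥ (S *ᵥ y) = 0 := by
        rw [show (z ⬝ᵥ (S *ᵥ y)) = (P *ᵥ x) ⬝ᵥ (S *ᵥ y) from by rw [hz],
          dot_mulVec_left, hPt, hy, Matrix.mulVec_mulVec, Matrix.mulVec_mulVec,
          hPSQ, Matrix.zero_mulVec, dotProduct_zero]
      have hsplit : x ⬝ᵥ (S *ᵥ x) = y ⬝ᵥ (S *ᵥ y) + z ⬝ᵥ (S *ᵥ z)
          + (y ⬝ᵥ (S *ᵥ z) + z ⬝ᵥ (S *ᵥ y)) := by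
        conv_lhs => rw [← hyz]
        rw [Matrix.mulVec_add, add_dotProduct, dotProduct_add, dotProduct_add]
        ring
      have hlowy := hlow y hVy
      have hz0 : 0 ≤ z ⬝ᵥ (S *ᵥ z) := by
        have h := hS.dotProduct_mulVec_nonneg z; rwa [star_vec] at h
      rw [Matrix.sub_mulVec, dotProduct_sub, Matrix.smul_mulVec,
        dotProduct_smul, smul_eq_mul, sub_nonneg]
      rw [hsplit, hcross1, hcross2, ← hyy]
      linarith
  -- operator norm facts
  set c := opNorm X with hc
  have hc0 : 0 ≤ c := opNorm_nonneg X
  have hXc : (c • (1 : Matrix (Fin n) (Fin n) ℝ) - X).PosSemidef := psd_opNorm_smul_sub hX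
  -- square root
  obtain ⟨A, hApsd, hAA, hAt⟩ : ∃ A : Matrix (Fin n) (Fin n) ℝ,
      A.PosSemidef ∧ A * A = X ∧ Aᵀ = A :=
    ⟨(psd_sqrt_ex hX).choose, (psd_sqrt_ex hX).choose_spec.1, (psd_sqrt_ex hX).choose_spec.2,
      by rw [← real_ct]; exact (psd_sqrt_ex hX).choose_spec.1.1⟩
  have hAQA : (A * Q * A).PosSemidef := by
    have h := hQpsd.conjTranspose_mul_mul_same A
    rwa [real_ct, hAt] at h
  have hAPA : (c • (1 : Matrix (Fin n) (Fin n) ℝ) - A * P * A).PosSemidef := by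
    have heq : c • (1 : Matrix (Fin n) (Fin n) ℝ) - A * P * A
        = (c • 1 - X) + A * Q * A := by
      have h : A * Q * A = X - A * P * A := by
        rw [hQdef, mul_sub, mul_one, sub_mul, hAA]
      rw [h]; abel
    rw [heq]; exact hXc.add hAQA
  have h3 : (c • X - X * P * X).PosSemidef := by
    have h := hAPA.conjTranspose_mul_mul_same A
    rw [real_ct, hAt] at h
    have heq : A * (c • (1 : Matrix (Fin n) (Fin n) ℝ) - A * P * A) * A
        = c • X - X * P * X := by
      rw [mul_sub, sub_mul, Matrix.mul_smul, Matrix.smul_mul, Matrix.mul_one, hAA]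
      congr 1
      calc A * (A * P * A) * A = (A * A) * P * (A * A) := by noncomm_ring
        _ = X * P * X := by rw [hAA]
    rwa [heq] at h
  -- trace bounds
  set a := (X * Q).trace with hauw
  set b := (X * P * X * Q).trace with hbuw
  set t := (X * Q * X * Q).trace with htuw
  have ha0 : 0 ≤ a := psd_trace_mul_nonneg hX hQpsd
  set δ := ε / T with hδ
  have haδ : a ≤ δ := by
    have h := psd_trace_mul_nonneg hX hKey
    rw [mul_sub, Matrix.mul_smul, Matrix.trace_sub, Matrix.trace_smul,
      smul_eq_mul] at h
    rw [hδ, le_div_iff₀ hT, hε]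
    linarith
  have hδ0 : 0 ≤ δ := le_trans ha0 haδ
  have hbc : b ≤ c * a := by
    have h := psd_trace_mul_nonneg h3 hQpsd
    rw [sub_mul, Matrix.smul_mul, Matrix.trace_sub, Matrix.trace_smul,
      smul_eq_mul] at h
    linarith
  have hta : t ≤ a ^ 2 := by
    have hM : (Q * X * Q).PosSemidef := by
      have h := hX.conjTranspose_mul_mul_same Q
      rwa [real_ct, hQt] at h
    have h := psd_trace_sq_le hM
    have e1 : ((Q * X * Q) * (Q * X * Q)).trace = t := by
      rw [show (Q * X * Q) * (Q * X * Q) = Q * (X * (Q * (X * Q))) from by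
        simp only [Matrix.mul_assoc, hQ2'], Matrix.trace_mul_comm]
      rw [htuw]
      simp only [Matrix.mul_assoc, hQ2]
    have e2 : (Q * X * Q).trace = a := by
      rw [Matrix.mul_assoc, Matrix.trace_mul_comm, hauw]
      simp only [Matrix.mul_assoc, hQ2]
    rw [e1, e2] at h
    exact h
  -- Frobenius norm computation
  have hEeq : X - V * (Vᵀ * X * V) * Vᵀ = X - P * X * P := by
    rw [hPdef]; simp only [Matrix.mul_assoc]
  have hEt : (X - P * X * P)ᵀ = X - P * X * P := by
    rw [transpose_sub, hXt]
    congr 1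
    rw [transpose_mul (P * X) P, transpose_mul P X, hPt, hXt]
    exact (Matrix.mul_assoc P X P).symm
  have hPQ1 : P + Q = 1 := by rw [hQdef]; abel
  have hXX : (X * X).trace = (X * P * X * P).trace + 2 * b + t := by
    have hx1 : X * X = X * P * X * P + X * P * X * Q + X * Q * X * P + X * Q * X * Q := by
      have h : X * X = (X * (P + Q)) * (X * (P + Q)) := by rw [hPQ1, Matrix.mul_one]
      rw [h]; noncomm_ring
    have hswap : (X * Q * X * P).trace = b := by
      rw [hbuw, show X * Q * X * P = (X * Q) * (X * P) from by
          simp only [Matrix.mul_assoc],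
        Matrix.trace_mul_comm]
      simp only [Matrix.mul_assoc]
    rw [hx1, Matrix.trace_add, Matrix.trace_add, Matrix.trace_add, hswap, hbuw, htuw]
    ring
  have hEE : ((X - P * X * P)ᵀ * (X - P * X * P)).trace = t + 2 * b := by
    rw [hEt]
    have hexp : (X - P * X * P) * (X - P * X * P)
        = X * X - X * (P * X * P) - (P * X * P) * X + (P * X * P) * (P * X * P) := by
      noncomm_ring
    have t1 : (X * (P * X * P)).trace = (X * P * X * P).trace := by
      simp only [Matrix.mul_assoc]
    have t2 : ((P * X * P) * X).trace = (X * P * X * P).trace := by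
      rw [Matrix.trace_mul_comm]
      simp only [Matrix.mul_assoc]
    have t3 : ((P * X * P) * (P * X * P)).trace = (X * P * X * P).trace := by
      rw [show (P * X * P) * (P * X * P) = P * (X * (P * (X * P))) from by
        simp only [Matrix.mul_assoc, hP2'], Matrix.trace_mul_comm]
      simp only [Matrix.mul_assoc, hP2]
    rw [hexp, Matrix.trace_add, Matrix.trace_sub, Matrix.trace_sub, t1, t2, t3, hXX]
    ring
  -- final assembly
  rw [hEeq, frobNorm, frob_sq_eq_trace, hEE]
  have hb2 : b ≤ c * δ := by nlinarith
  have ht2 : t ≤ δ ^ 2 := by nlinarith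
  have hrhs0 : 0 ≤ δ + Real.sqrt (2 * δ * c) := add_nonneg hδ0 (Real.sqrt_nonneg _)
  have harg : 0 ≤ 2 * δ * c := mul_nonneg (by linarith) hc0
  have hsq : (δ + Real.sqrt (2 * δ * c)) ^ 2
      = δ ^ 2 + 2 * δ * Real.sqrt (2 * δ * c) + 2 * δ * c := by
    rw [add_sq, Real.sq_sqrt harg]
  have hle : t + 2 * b ≤ (δ + Real.sqrt (2 * δ * c)) ^ 2 := by
    rw [hsq]
    nlinarith [Real.sqrt_nonneg (2 * δ * c)]
  calc Real.sqrt (t + 2 * b) ≤ Real.sqrt ((δ + Real.sqrt (2 * δ * c)) ^ 2) :=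
        Real.sqrt_le_sqrt hle
    _ = δ + Real.sqrt (2 * δ * c) := Real.sqrt_sq hrhs0
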